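/- Let r be a rational function of degree N, α ∈ Ω(r), and let a, b ∈ ℂ with a − α b ≠ 0. Then the function f(z) = Z_r(z) c / (a − r(z) b), for any nonzero c ∈ ℂ^N, is an eigenvector of R^{(r)}_α with eigenvalue b/(a − α b). Conversely, every eigenvector of R^{(r)}_α on the space of functions of the form Z_r(z) F(r(z)) (F analytic near α) is of this form. -/

import Mathlib

open Polynomial

noncomputable section

/-- The rational function `r = p/q`, evaluated pointwise. -/
def ratEval (p q : Polynomial ℂ) (z : ℂ) : ℂ := p.eval z / q.eval z

/-- The difference quotient `z ↦ (r(z) − r(a))/(z − a)` (equal to `r′(a)` at `z = a`). -/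
def dq (p q : Polynomial ℂ) (a : ℂ) : ℂ → ℂ :=
  fun z => if z = a then deriv (ratEval p q) a
           else (ratEval p q z - ratEval p q a) / (z - a)

/-- The state space `𝔏(r)`: the span of the difference quotients of `r = p/q`. -/
def stateSpace (p q : Polynomial ℂ) : Submodule ℂ (ℂ → ℂ) :=
  Submodule.span ℂ {f | ∃ a : ℂ, q.eval a ≠ 0 ∧ f = dq p q a}

lemma deriv_ratEval (p q : Polynomial ℂ) {x : ℂ} (hx : q.eval x ≠ 0) :
    deriv (ratEval p q) x
      = (p.derivative.eval x * q.eval x - p.eval x * q.derivative.eval x) / (q.eval x) ^ 2 := by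
  have h : HasDerivAt (ratEval p q)
      ((p.derivative.eval x * q.eval x - p.eval x * q.derivative.eval x) / (q.eval x) ^ 2) x := by
    exact (p.hasDerivAt x).div (q.hasDerivAt x) hx
  exact h.deriv

lemma dq_rep (p q : Polynomial ℂ) (N : ℕ) (hp : p.natDegree ≤ N) (hqd : q.natDegree ≤ N)
    {a : ℂ} (ha : q.eval a ≠ 0) :
    ∃ G : Polynomial ℂ, G.degree < (N : ℕ) ∧
      ∀ z : ℂ, q.eval z ≠ 0 → dq p q a z = G.eval z / q.eval z := by
  set num : Polynomial ℂ := p * C (q.eval a) - C (p.eval a) * q with hnum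
  have hnuma : num.eval a = 0 := by simp [hnum]
  obtain ⟨H, hH⟩ : (X - C a) ∣ num := dvd_iff_isRoot.mpr hnuma
  have hdegnum : num.natDegree ≤ N := by
    refine le_trans (natDegree_sub_le _ _) (max_le ?_ ?_)
    · exact le_trans (natDegree_mul_C_le _ _) hp
    · exact le_trans (natDegree_C_mul_le _ _) hqd
  have hdegH : H.degree < (N : ℕ) := by
    rcases eq_or_ne H 0 with h0 | h0
    · rw [h0, degree_zero]; exact WithBot.bot_lt_coe _
    · have hmul := degree_mul (p := X - C a) (q := H)
      rw [← hH, degree_X_sub_C, degree_eq_natDegree h0] at hmul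
      have h1 : num.degree ≤ (N : ℕ) := le_trans degree_le_natDegree (Nat.cast_le.mpr hdegnum)
      rw [hmul] at h1
      have h2 : ((1 + H.natDegree : ℕ) : WithBot ℕ) ≤ (N : ℕ) := by
        push_cast; exact h1
      have h3 : 1 + H.natDegree ≤ N := Nat.cast_le.mp h2
      exact lt_of_le_of_lt degree_le_natDegree (Nat.cast_lt.mpr (by omega))
  have hderiv : derivative num = derivative p * C (q.eval a) - C (p.eval a) * derivative q := by
    simp [hnum]
  have hHa : H.eval a = p.derivative.eval a * q.eval a - p.eval a * q.derivative.eval a := by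
    have := congrArg (fun f => Polynomial.eval a (derivative f)) hH
    simp only [derivative_mul, derivative_sub, derivative_X, derivative_C, eval_add, eval_mul,
      eval_sub, eval_X, eval_C, sub_self, zero_mul, mul_zero, sub_zero, one_mul] at this ⊢
    rw [hderiv] at this
    simpa using this.symm
  refine ⟨C (q.eval a)⁻¹ * H, lt_of_le_of_lt (le_trans (degree_mul_le _ _)
      (add_le_add degree_C_le le_rfl)) (by simpa using hdegH), ?_⟩
  intro z hz
  by_cases hza : z = a
  · subst hza
    rw [dq, if_pos rfl, deriv_ratEval p q hz, eval_mul, eval_C, hHa,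
      inv_mul_eq_div, div_div, sq]
  · rw [dq, if_neg hza]
    have hz' : num.eval z = (z - a) * H.eval z := by rw [hH]; simp
    have hza' : z - a ≠ 0 := sub_ne_zero.mpr hza
    have : p.eval z * q.eval a - p.eval a * q.eval z = (z - a) * H.eval z := by
      simpa [hnum] using hz'
    rw [eval_mul, eval_C, ratEval, ratEval]
    rw [div_sub_div _ _ hz ha]
    rw [show eval z p * eval a q - eval z q * eval a p = (z - a) * eval z H by
      linear_combination this]
    field_simp
lemma stateSpace_rep (p q : Polynomial ℂ) (N : ℕ) (hp : p.natDegree ≤ N)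
    (hqd : q.natDegree ≤ N) {f : ℂ → ℂ} (hf : f ∈ stateSpace p q) :
    ∃ G : Polynomial ℂ, G.degree < (N : ℕ) ∧
      ∀ z : ℂ, q.eval z ≠ 0 → f z = G.eval z / q.eval z := by
  induction hf using Submodule.span_induction with
  | mem x hx => obtain ⟨a, ha, rfl⟩ := hx; exact dq_rep p q N hp hqd ha
  | zero => exact ⟨0, by rw [degree_zero]; exact WithBot.bot_lt_coe N, by simp⟩
  | add x y _ _ hx hy =>
      obtain ⟨G1, h1, e1⟩ := hx; obtain ⟨G2, h2, e2⟩ := hy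
      refine ⟨G1 + G2, lt_of_le_of_lt (degree_add_le _ _) (max_lt h1 h2), fun z hz => ?_⟩
      simp [e1 z hz, e2 z hz, add_div]
  | smul c x _ hx =>
      obtain ⟨G, h, e⟩ := hx
      refine ⟨C c * G, lt_of_le_of_lt (degree_mul_le _ _) ?_, fun z hz => ?_⟩
      · simpa using lt_of_le_of_lt (add_le_add degree_C_le le_rfl) (by simpa using h)
      · simp [e z hz]; ring
lemma P_factor {N : ℕ} (P : Polynomial ℂ) (hPne : P ≠ 0) (w : Fin N → ℂ)
    (hw : Function.Injective w) (hroots : ∀ n, P.eval (w n) = 0) (hdegP : P.natDegree ≤ N) :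
    ∃ lc : ℂ, lc ≠ 0 ∧ P = C lc * Lagrange.nodal Finset.univ w := by
  classical
  have hnodup : (Finset.univ.val.map w).Nodup := Finset.univ.nodup.map hw
  have hle : (Finset.univ.val.map w) ≤ P.roots := by
    rw [Multiset.le_iff_count]
    intro x
    by_cases hx : x ∈ Finset.univ.val.map w
    · have h1 : (Finset.univ.val.map w).count x ≤ 1 :=
        (Multiset.nodup_iff_count_le_one.mp hnodup) x
      obtain ⟨n, _, rfl⟩ := Multiset.mem_map.mp hx
      have h2 : w n ∈ P.roots := by
        rw [mem_roots hPne]; exact hroots n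
      have h3 : 1 ≤ P.roots.count (w n) := Multiset.one_le_count_iff_mem.mpr h2
      omega
    · rw [Multiset.count_eq_zero.mpr hx]; omega
  have hnodal : Lagrange.nodal Finset.univ w
      = ((Finset.univ.val.map w).map fun a => X - C a).prod := by
    rw [Multiset.map_map, Lagrange.nodal, Finset.prod]
    rfl
  have hdvd : Lagrange.nodal Finset.univ w ∣ P := by
    rw [hnodal]
    exact (Multiset.prod_X_sub_C_dvd_iff_le_roots hPne _).mpr hle
  obtain ⟨R, hR⟩ := hdvd
  have hR0 : R ≠ 0 := by rintro rfl; rw [mul_zero] at hR; exact hPne hR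
  have hnd : (Lagrange.nodal Finset.univ w).natDegree = N := by
    rw [Lagrange.natDegree_nodal, Finset.card_univ, Fintype.card_fin]
  have hdeg : P.natDegree = N + R.natDegree := by
    rw [hR, (Lagrange.nodal_monic).natDegree_mul' hR0, hnd]
  have hRdeg : R.natDegree = 0 := by omega
  refine ⟨R.coeff 0, ?_, ?_⟩
  · intro h0
    rw [eq_C_of_natDegree_eq_zero hRdeg, h0, map_zero, mul_zero] at hR
    exact hPne hR
  · rw [hR, eq_C_of_natDegree_eq_zero hRdeg, mul_comm]; simp

lemma P_eval_eq {N : ℕ} {P : Polynomial ℂ} {w : Fin N → ℂ} {lc : ℂ}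
    (hfac : P = C lc * Lagrange.nodal Finset.univ w) (z : ℂ) :
    P.eval z = lc * ∏ n, (z - w n) := by
  rw [hfac]; simp [Lagrange.eval_nodal]

lemma P_eval_ne {N : ℕ} {P : Polynomial ℂ} {w : Fin N → ℂ} {lc : ℂ}
    (hfac : P = C lc * Lagrange.nodal Finset.univ w) (hlc : lc ≠ 0)
    {z : ℂ} (hz : ∀ n, z ≠ w n) : P.eval z ≠ 0 := by
  rw [P_eval_eq hfac]
  exact mul_ne_zero hlc (Finset.prod_ne_zero_iff.mpr fun n _ => sub_ne_zero.mpr (hz n))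

lemma P_deriv_eval {N : ℕ} {P : Polynomial ℂ} {w : Fin N → ℂ} {lc : ℂ}
    (hfac : P = C lc * Lagrange.nodal Finset.univ w) (n : Fin N) :
    P.derivative.eval (w n)
      = lc * ∏ m ∈ Finset.univ.erase n, (w n - w m) := by
  classical
  rw [hfac, derivative_mul, derivative_C, zero_mul, zero_add, eval_mul, eval_C,
    Lagrange.eval_nodal_derivative_eval_node_eq (Finset.mem_univ n), Lagrange.eval_nodal]

lemma P_deriv_ne {N : ℕ} {P : Polynomial ℂ} {w : Fin N → ℂ} {lc : ℂ}
    (hfac : P = C lc * Lagrange.nodal Finset.univ w) (hlc : lc ≠ 0)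
    (hw : Function.Injective w) (n : Fin N) : P.derivative.eval (w n) ≠ 0 := by
  rw [P_deriv_eval hfac]
  refine mul_ne_zero hlc (Finset.prod_ne_zero_iff.mpr fun m hm => sub_ne_zero.mpr ?_)
  exact fun h => (Finset.mem_erase.mp hm).1 (hw h).symm

lemma key_interp {N : ℕ} {P : Polynomial ℂ} {w : Fin N → ℂ} {lc : ℂ}
    (hfac : P = C lc * Lagrange.nodal Finset.univ w) (hlc : lc ≠ 0)
    (hw : Function.Injective w) (G : Polynomial ℂ) (hG : G.degree < (N : ℕ))
    {z : ℂ} (hz : ∀ n, z ≠ w n) :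
    G.eval z / P.eval z
      = ∑ n, G.eval (w n) / (P.derivative.eval (w n) * (z - w n)) := by
  classical
  have hinj : Set.InjOn w ↑(Finset.univ : Finset (Fin N)) := fun a _ b _ h => hw h
  have hcard : G.degree < (Finset.univ : Finset (Fin N)).card := by
    rwa [Finset.card_univ, Fintype.card_fin]
  have hinterp := Lagrange.eq_interpolate (v := w) hinj hcard
  have hx : ∀ i ∈ Finset.univ, z ≠ w i := fun i _ => hz i
  have heval := Lagrange.eval_interpolate_not_at_node (x := z)
    (fun i => G.eval (w i)) hx
  rw [← hinterp] at heval
  -- heval : G.eval z = eval z (nodal univ w) * ∑ i, nodalWeight univ w i * (z - w i)⁻¹ * G.eval (w i)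
  have hnodz : eval z (Lagrange.nodal Finset.univ w) ≠ 0 :=
    Lagrange.eval_nodal_not_at_node hx
  have hPz : P.eval z = lc * eval z (Lagrange.nodal Finset.univ w) := by
    rw [hfac, eval_mul, eval_C]
  rw [heval, hPz, mul_comm lc _, mul_div_mul_left _ _ hnodz, Finset.sum_div]
  refine Finset.sum_congr rfl fun i _ => ?_
  rw [Lagrange.nodalWeight_eq_eval_derivative_nodal (Finset.mem_univ i)]
  have hD : P.derivative.eval (w i)
      = lc * eval (w i) (derivative (Lagrange.nodal Finset.univ w)) := by
    rw [hfac, derivative_mul, derivative_C, zero_mul, zero_add, eval_mul, eval_C]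
  have hDne : eval (w i) (derivative (Lagrange.nodal Finset.univ w)) ≠ 0 := by
    intro h0
    exact P_deriv_ne hfac hlc hw i (by rw [hD, h0, mul_zero])
  have hzi : z - w i ≠ 0 := sub_ne_zero.mpr (hz i)
  rw [hD, div_eq_div_iff hlc (mul_ne_zero (mul_ne_zero hlc hDne) hzi)]
  have h1 := inv_mul_cancel₀ hDne
  have h2 := inv_mul_cancel₀ hzi
  calc (eval (w i) (derivative (Lagrange.nodal Finset.univ w)))⁻¹ * (z - w i)⁻¹ * eval (w i) G
        * (lc * eval (w i) (derivative (Lagrange.nodal Finset.univ w)) * (z - w i))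
      = eval (w i) G * lc
          * ((eval (w i) (derivative (Lagrange.nodal Finset.univ w)))⁻¹
              * eval (w i) (derivative (Lagrange.nodal Finset.univ w)))
          * ((z - w i)⁻¹ * (z - w i)) := by ring
    _ = eval (w i) G * lc := by rw [h1, h2, mul_one, mul_one]
lemma coprime_eval_ne (p q : Polynomial ℂ) (hco : IsCoprime p q) (x : ℂ)
    (hx : p.eval x = 0) : q.eval x ≠ 0 := by
  obtain ⟨u, v, huv⟩ := hco
  intro h0
  have := congrArg (Polynomial.eval x) huv
  simp [hx, h0] at this

lemma Wr_ne (p q : Polynomial ℂ) (hco : IsCoprime p q) (hNpos : 0 < p.natDegree) :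
    p.derivative * q - p * q.derivative ≠ 0 := by
  intro h
  have h' : p.derivative * q = p * q.derivative := sub_eq_zero.mp h
  have hdvd : p ∣ p.derivative * q := ⟨q.derivative, h'⟩
  have hp' : p ∣ p.derivative := hco.dvd_of_dvd_mul_right hdvd
  rcases eq_or_ne p.derivative 0 with hd | hd
  · have := natDegree_eq_zero_of_derivative_eq_zero hd
    omega
  · have h1 := Polynomial.natDegree_le_of_dvd hp' hd
    have h2 := Polynomial.natDegree_derivative_lt (p := p) (by omega)
    omega

lemma fiber_exists (p q : Polynomial ℂ) (hco : IsCoprime p q) (N : ℕ)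
    (hN : p.natDegree = N) (hdeg : q.natDegree ≤ N) (hNpos : 0 < N) (t : ℂ)
    (ht1 : q.natDegree = N → t ≠ p.leadingCoeff / q.leadingCoeff)
    (ht2 : ∀ x : ℂ, (p.derivative * q - p * q.derivative).eval x = 0 →
      q.eval x ≠ 0 → t ≠ p.eval x / q.eval x) :
    ∃ v : Fin N → ℂ, Function.Injective v ∧
      ∀ k, q.eval (v k) ≠ 0 ∧ p.eval (v k) = t * q.eval (v k) := by
  classical
  set Pt : Polynomial ℂ := p - C t * q with hPtdef
  have hp0 : p ≠ 0 := fun h => by rw [h] at hN; simp at hN; omega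
  have hPt0 : Pt ≠ 0 := by
    intro h0
    have hpq : p = C t * q := by
      have := sub_eq_zero.mp h0; exact this
    have hqdvd : q ∣ p := ⟨C t, by rw [hpq, mul_comm]⟩
    have hqu : IsUnit q := hco.isUnit_of_dvd' hqdvd dvd_rfl
    have hq0 : q.natDegree = 0 := natDegree_eq_zero_of_isUnit hqu
    have : p.natDegree ≤ 0 := by
      rw [hpq]; exact le_trans (natDegree_C_mul_le _ _) (by omega)
    omega
  have hcoeff : Pt.coeff N ≠ 0 := by
    rcases eq_or_ne q.natDegree N with hqN | hqN
    · have hq0 : q ≠ 0 := by intro h; rw [h] at hqN; simp at hqN; omega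
      have hqlc : q.coeff N ≠ 0 := by rw [← hqN]; exact leadingCoeff_ne_zero.mpr hq0
      have hplc : p.coeff N = p.leadingCoeff := by rw [← hN]; rfl
      have hqlc' : q.coeff N = q.leadingCoeff := by rw [← hqN]; rfl
      simp only [hPtdef, coeff_sub, coeff_C_mul]
      intro h0
      apply ht1 hqN
      rw [eq_div_iff (by rwa [← hqlc'])]
      rw [hplc, hqlc'] at h0
      linear_combination -h0
    · have hqN' : q.natDegree < N := lt_of_le_of_ne hdeg hqN
      have : q.coeff N = 0 := coeff_eq_zero_of_natDegree_lt hqN'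
      simp only [hPtdef, coeff_sub, coeff_C_mul, this, mul_zero, sub_zero]
      rw [← hN]
      exact leadingCoeff_ne_zero.mpr hp0
  have hPtdeg : Pt.natDegree = N := by
    refine le_antisymm (le_trans (natDegree_sub_le _ _) (max_le (by omega) ?_)) 
      (le_natDegree_of_ne_zero hcoeff)
    exact le_trans (natDegree_C_mul_le _ _) hdeg
  have hcard : Multiset.card Pt.roots = N := by
    rw [← hPtdeg]
    exact (splits_iff_card_roots).mp (IsAlgClosed.splits Pt)
  have hnodup : Pt.roots.Nodup := by
    rw [Multiset.nodup_iff_count_le_one]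
    intro x
    by_contra hcnt
    push_neg at hcnt
    have h2 : 2 ≤ rootMultiplicity x Pt := by rw [← count_roots]; omega
    have hdvd2 : (X - C x) ^ 2 ∣ Pt :=
      dvd_trans (pow_dvd_pow _ h2) (Pt.pow_rootMultiplicity_dvd x)
    obtain ⟨R2, hR2⟩ := hdvd2
    have hPx : Pt.eval x = 0 := by rw [hR2]; simp
    have hPx' : Pt.derivative.eval x = 0 := by
      rw [hR2, derivative_mul, derivative_pow]
      simp
    have hpx : p.eval x = t * q.eval x := by
      have := hPx; simp [hPtdef] at this; linear_combination this
    have hqx : q.eval x ≠ 0 := by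
      intro h0
      exact coprime_eval_ne p q hco x (by rw [hpx, h0, mul_zero]) h0
    have hpx' : p.derivative.eval x = t * q.derivative.eval x := by
      have : Pt.derivative = p.derivative - C t * q.derivative := by
        simp [hPtdef]
      rw [this] at hPx'
      simp at hPx'
      linear_combination hPx'
    have hWx : (p.derivative * q - p * q.derivative).eval x = 0 := by
      simp [hpx, hpx']; ring
    exact ht2 x hWx hqx (by rw [hpx]; field_simp)
  have hScard : Pt.roots.toFinset.card = N := by
    rw [Multiset.toFinset_card_of_nodup hnodup, hcard]
  set eqv := Finset.equivFinOfCardEq hScard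
  refine ⟨fun k => (eqv.symm k : ℂ), ?_, ?_⟩
  · intro k l h
    have : eqv.symm k = eqv.symm l := Subtype.ext h
    simpa using congrArg eqv this
  · intro k
    have hmem : ((eqv.symm k : ℂ)) ∈ Pt.roots.toFinset := (eqv.symm k).2
    rw [Multiset.mem_toFinset, mem_roots hPt0] at hmem
    have hpx : p.eval ((eqv.symm k : ℂ)) = t * q.eval ((eqv.symm k : ℂ)) := by
      have := hmem; simp [hPtdef, IsRoot] at this; linear_combination this
    refine ⟨?_, hpx⟩
    intro h0
    exact coprime_eval_ne p q hco _ (by rw [hpx, h0, mul_zero]) h0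

lemma poly_zero_of_roots {N : ℕ} (G : Polynomial ℂ) (hdeg : G.degree < (N : ℕ))
    (v : Fin N → ℂ) (hv : Function.Injective v) (hz : ∀ k, G.eval (v k) = 0) : G = 0 := by
  classical
  by_contra h0
  have hmem : ∀ k, v k ∈ G.roots.toFinset := fun k =>
    Multiset.mem_toFinset.mpr ((mem_roots h0).mpr (hz k))
  have hsub : Finset.univ.image v ⊆ G.roots.toFinset := by
    intro x hx
    obtain ⟨k, _, rfl⟩ := Finset.mem_image.mp hx
    exact hmem k
  have h1 : N ≤ G.natDegree := by
    calc N = (Finset.univ.image v).card := by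
          rw [Finset.card_image_of_injective _ hv, Finset.card_univ, Fintype.card_fin]
      _ ≤ G.roots.toFinset.card := Finset.card_le_card hsub
      _ ≤ Multiset.card G.roots := Multiset.toFinset_card_le _
      _ ≤ G.natDegree := G.card_roots'
  rw [degree_eq_natDegree h0] at hdeg
  exact absurd (Nat.cast_lt.mp hdeg) (by omega)

lemma eq_zero_of_eventually_punctured {h : ℂ → ℂ} {t : ℂ} (hc : ContinuousAt h t)
    (hev : ∀ᶠ s in nhdsWithin t {t}ᶜ, h s = 0) : h t = 0 := by
  have h1 : Filter.Tendsto h (nhdsWithin t {t}ᶜ) (nhds (h t)) :=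
    (hc.continuousWithinAt : ContinuousWithinAt h {t}ᶜ t)
  have h2 : Filter.Tendsto h (nhdsWithin t {t}ᶜ) (nhds 0) := by
    refine Filter.Tendsto.congr' ?_ tendsto_const_nhds
    filter_upwards [hev] with s hs using hs.symm
  exact tendsto_nhds_unique h1 h2

lemma div_div_helper (a b c d : ℂ) (hb : b ≠ 0) : (a / b) / ((c / b) * d) = a / (c * d) := by
  by_cases hc : c = 0
  · simp [hc]
  by_cases hd : d = 0
  · simp [hd]
  field_simp

lemma div_div_helper2 (a b c : ℂ) (hb : b ≠ 0) : (a / b) / (c / b) = a / c := by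
  by_cases hc : c = 0
  · simp [hc]
  field_simp

/-- The generalized backward-shift operator `R^{(r)}_α`. -/
def Rop (p q : Polynomial ℂ) (α : ℂ) {N : ℕ} (w : Fin N → ℂ) (f : ℂ → ℂ) : ℂ → ℂ :=
  fun z => f z / (ratEval p q z - α)
    - ∑ n : Fin N, f (w n) / (deriv (ratEval p q) (w n) * (z - w n))

/-- the functions `f(z) = Z_r(z)c/(a − r(z)b)` (with `a − αb ≠ 0`,
`c ≠ 0`) are eigenvectors of `R^{(r)}_α` with eigenvalue `b/(a − αb)`, and
conversely every eigenvector of `R^{(r)}_α` of the form `Z_r(z)F(r(z))`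
(`F` analytic near `α`) is of this form. -/
theorem stmt14 (p q : Polynomial ℂ) (hco : IsCoprime p q) (N : ℕ)
    (hN : p.natDegree = N) (hdeg : q.natDegree ≤ p.natDegree)
    (e : Fin N → (ℂ → ℂ)) (hmem : ∀ n, e n ∈ stateSpace p q)
    (hli : LinearIndependent ℂ e)
    (hspan : Submodule.span ℂ (Set.range e) = stateSpace p q)
    (α : ℂ) (w : Fin N → ℂ) (hw : Function.Injective w)
    (hroot : ∀ n, p.eval (w n) = α * q.eval (w n)) (hq : ∀ n, q.eval (w n) ≠ 0) :
    -- forward direction: eigenvector property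
    (∀ a b : ℂ, a - α * b ≠ 0 → ∀ c : Fin N → ℂ, c ≠ 0 →
      ∀ z : ℂ, q.eval z ≠ 0 → ratEval p q z ≠ α → a - ratEval p q z * b ≠ 0 →
        Rop p q α w (fun ζ => (∑ n : Fin N, e n ζ * c n) / (a - ratEval p q ζ * b)) z
          = (b / (a - α * b)) *
              ((∑ n : Fin N, e n z * c n) / (a - ratEval p q z * b))) ∧
    -- converse: every eigenvector of the form `Z_r F(r)` is of this form
    (∀ (U : Set ℂ), IsOpen U → IsConnected U → α ∈ U →
      ∀ F : Fin N → ℂ → ℂ, (∀ n, AnalyticOnNhd ℂ (F n) U) →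
      ∀ μ : ℂ,
        (∀ z : ℂ, q.eval z ≠ 0 → ratEval p q z ∈ U → ratEval p q z ≠ α →
          Rop p q α w (fun ζ => ∑ n : Fin N, e n ζ * F n (ratEval p q ζ)) z
            = μ * ∑ n : Fin N, e n z * F n (ratEval p q z)) →
        (∃ z : ℂ, q.eval z ≠ 0 ∧ ratEval p q z ∈ U ∧
          (∑ n : Fin N, e n z * F n (ratEval p q z)) ≠ 0) →
        ∃ a b : ℂ, ∃ c : Fin N → ℂ, a - α * b ≠ 0 ∧ c ≠ 0 ∧ μ = b / (a - α * b) ∧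
          ∀ z : ℂ, q.eval z ≠ 0 → ratEval p q z ∈ U →
            ∑ n : Fin N, e n z * F n (ratEval p q z)
              = (∑ n : Fin N, e n z * c n) / (a - ratEval p q z * b)) := by
  classical
  rcases Nat.eq_zero_or_pos N with hN0 | hNpos
  · subst hN0
    constructor
    · intro a b hab c hc z hz hzα hab2
      simp [Rop]
    · intro U _ _ _ F _ μ _ hex
      obtain ⟨z, _, _, hne⟩ := hex
      simp at hne
  -- main case
  have hp0 : p ≠ 0 := fun h => by rw [h] at hN; simp at hN; omega
  have hpd : p.natDegree ≤ N := hN.le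
  have hqd : q.natDegree ≤ N := hN ▸ hdeg
  choose E hEdeg hEval using fun n => stateSpace_rep p q N hpd hqd (hmem n)
  set P : Polynomial ℂ := p - C α * q with hPdef
  have hProot : ∀ n, P.eval (w n) = 0 := by
    intro n; simp only [hPdef, eval_sub, eval_mul, eval_C]; linear_combination hroot n
  have hPne : P ≠ 0 := by
    intro h0
    have hpq : p = C α * q := sub_eq_zero.mp h0
    have hqu : IsUnit q := hco.isUnit_of_dvd' ⟨C α, by rw [hpq, mul_comm]⟩ dvd_rfl
    have hq0 : q.natDegree = 0 := natDegree_eq_zero_of_isUnit hqu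
    have : p.natDegree ≤ 0 := by
      rw [hpq]; exact le_trans (natDegree_C_mul_le _ _) (by omega)
    omega
  have hPdeg : P.natDegree ≤ N :=
    le_trans (natDegree_sub_le _ _) (max_le (by omega)
      (le_trans (natDegree_C_mul_le _ _) hqd))
  obtain ⟨lc, hlc0, hfac⟩ := P_factor P hPne w hw hProot hPdeg
  have hrw : ∀ n, ratEval p q (w n) = α := by
    intro n; rw [ratEval, hroot n]; exact mul_div_cancel_right₀ α (hq n)
  have hP'w : ∀ n, P.derivative.eval (w n) ≠ 0 := P_deriv_ne hfac hlc0 hw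
  have hderivr : ∀ n, deriv (ratEval p q) (w n) = P.derivative.eval (w n) / q.eval (w n) := by
    intro n
    rw [deriv_ratEval p q (hq n)]
    have hP' : P.derivative = p.derivative - C α * q.derivative := by
      simp [hPdef]
    rw [hP', eval_sub, eval_mul, eval_C,
      div_eq_div_iff (pow_ne_zero 2 (hq n)) (hq n)]
    linear_combination (- q.derivative.eval (w n) * q.eval (w n)) * hroot n
  have hzne : ∀ z, ratEval p q z ≠ α → ∀ n, z ≠ w n := by
    intro z hzα n h
    exact hzα (by rw [h]; exact hrw n)
  have hrsub : ∀ z, q.eval z ≠ 0 → ratEval p q z - α = P.eval z / q.eval z := by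
    intro z hz
    rw [ratEval, hPdef, eval_sub, eval_mul, eval_C, sub_div, mul_div_assoc,
      div_self hz, mul_one]
  -- the key partial-fraction identity for elements of the state space
  have KEY2 : ∀ g : ℂ → ℂ, g ∈ stateSpace p q → ∀ z : ℂ, q.eval z ≠ 0 →
      ratEval p q z ≠ α →
      (∑ n : Fin N, g (w n) / (deriv (ratEval p q) (w n) * (z - w n)))
        = g z / (ratEval p q z - α) := by
    intro g hg z hz hzα
    obtain ⟨G, hGdeg, hGeval⟩ := stateSpace_rep p q N hpd hqd hg
    have hzw := hzne z hzα
    have hPz := P_eval_ne hfac hlc0 hzw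
    have key := key_interp hfac hlc0 hw G hGdeg hzw
    calc ∑ n : Fin N, g (w n) / (deriv (ratEval p q) (w n) * (z - w n))
        = ∑ n : Fin N, G.eval (w n) / (P.derivative.eval (w n) * (z - w n)) := by
          refine Finset.sum_congr rfl fun n _ => ?_
          rw [hGeval _ (hq n), hderivr n]
          exact div_div_helper _ _ _ _ (hq n)
      _ = G.eval z / P.eval z := key.symm
      _ = g z / (ratEval p q z - α) := by
          rw [hGeval z hz, hrsub z hz]
          exact (div_div_helper2 _ _ _ hz).symm
  have hsummem : ∀ x : Fin N → ℂ, (fun ζ => ∑ n : Fin N, e n ζ * x n) ∈ stateSpace p q := by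
    intro x
    have hxe : (fun ζ => ∑ n : Fin N, e n ζ * x n) = ∑ n : Fin N, x n • e n := by
      funext ζ
      rw [Finset.sum_apply]
      exact Finset.sum_congr rfl fun n _ => by simp [mul_comm]
    rw [hxe]
    exact Submodule.sum_mem _ fun n _ => Submodule.smul_mem _ _ (hmem n)
  constructor
  · -- forward direction
    intro a b hab c _ z hz hzα hab2
    have hgmem := hsummem c
    have hrzα : ratEval p q z - α ≠ 0 := sub_ne_zero.mpr hzα
    have hfw : ∀ k : Fin N,
        (∑ n : Fin N, e n (w k) * c n) / (a - ratEval p q (w k) * b)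
          = (∑ n : Fin N, e n (w k) * c n) / (a - α * b) := by
      intro k; rw [hrw k]
    show (∑ n : Fin N, e n z * c n) / (a - ratEval p q z * b) / (ratEval p q z - α)
        - ∑ k : Fin N, (∑ n : Fin N, e n (w k) * c n) / (a - ratEval p q (w k) * b)
            / (deriv (ratEval p q) (w k) * (z - w k)) = _
    have hsum : ∑ k : Fin N, (∑ n : Fin N, e n (w k) * c n) / (a - ratEval p q (w k) * b)
            / (deriv (ratEval p q) (w k) * (z - w k))
        = ((∑ n : Fin N, e n z * c n) / (ratEval p q z - α)) / (a - α * b) := by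
      rw [← KEY2 _ hgmem z hz hzα, Finset.sum_div]
      refine Finset.sum_congr rfl fun k _ => ?_
      rw [hfw k, div_right_comm]
    rw [hsum]
    have hab' : a - b * α ≠ 0 := by rwa [mul_comm b α]
    field_simp
    ring
  · -- converse
    intro U hUo hUc hαU F hF μ heig hex
    set W : Polynomial ℂ := p.derivative * q - p * q.derivative with hWdef
    have hW : W ≠ 0 := Wr_ne p q hco (by omega)
    set Bad : Finset ℂ := insert α (insert (p.leadingCoeff / q.leadingCoeff)
      ((W.roots.toFinset).image (fun x => ratEval p q x))) with hBaddef
    have hfib : ∀ t : ℂ, t ∉ Bad → ∃ v : Fin N → ℂ, Function.Injective v ∧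
        ∀ k, q.eval (v k) ≠ 0 ∧ p.eval (v k) = t * q.eval (v k) := by
      intro t ht
      apply fiber_exists p q hco N hN hqd hNpos t
      · intro _ h
        exact ht (by rw [hBaddef, h]; exact Finset.mem_insert.mpr (Or.inr
          (Finset.mem_insert.mpr (Or.inl rfl))))
      · intro x hWx hqx h
        refine ht ?_
        rw [hBaddef]
        refine Finset.mem_insert.mpr (Or.inr (Finset.mem_insert.mpr (Or.inr ?_)))
        refine Finset.mem_image.mpr ⟨x, ?_, ?_⟩
        · rw [Multiset.mem_toFinset, mem_roots hW]
          exact hWx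
        · rw [ratEval, h]
    -- the eigen-equation in product form
    have hstar : ∀ z : ℂ, q.eval z ≠ 0 → ratEval p q z ∈ U →
        (∑ n : Fin N, e n z * F n (ratEval p q z)) * (1 - μ * (ratEval p q z - α))
          = ∑ n : Fin N, e n z * F n α := by
      intro z hz hU
      by_cases hzα : ratEval p q z = α
      · rw [hzα]; simp
      · have h := heig z hz hU hzα
        have hgmem := hsummem (fun n => F n α)
        have hrzα : ratEval p q z - α ≠ 0 := sub_ne_zero.mpr hzα
        rw [Rop] at h
        have hfw : ∑ k : Fin N, (∑ n : Fin N, e n (w k) * F n (ratEval p q (w k)))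
              / (deriv (ratEval p q) (w k) * (z - w k))
            = (∑ n : Fin N, e n z * F n α) / (ratEval p q z - α) := by
          rw [← KEY2 _ hgmem z hz hzα]
          refine Finset.sum_congr rfl fun k _ => ?_
          rw [hrw k]
        rw [hfw] at h
        field_simp at h
        linear_combination h
    have hsum_eval : ∀ (x : Fin N → ℂ) (z : ℂ), q.eval z ≠ 0 →
        ∑ n : Fin N, e n z * x n = (∑ n : Fin N, C (x n) * E n).eval z / q.eval z := by
      intro x z hz
      rw [eval_finset_sum, Finset.sum_div]
      refine Finset.sum_congr rfl fun n _ => ?_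
      rw [eval_mul, eval_C, hEval n z hz]
      ring
    have hXdeg : ∀ x : Fin N → ℂ, (∑ n : Fin N, C (x n) * E n).degree < (N : ℕ) := by
      intro x
      refine lt_of_le_of_lt (degree_sum_le _ _) ?_
      refine (Finset.sup_lt_iff (WithBot.bot_lt_coe N)).mpr ?_
      intro n _
      exact lt_of_le_of_lt (le_trans (degree_mul_le _ _)
        (by simpa using add_le_add degree_C_le (le_refl (E n).degree))) (hEdeg n)
    have hrearr : ∀ (z t : ℂ),
        (∑ n : Fin N, e n z * (F n t * (1 - μ * (t - α)) - F n α))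
          = (∑ n : Fin N, e n z * F n t) * (1 - μ * (t - α))
            - ∑ n : Fin N, e n z * F n α := by
      intro z t
      rw [Finset.sum_mul, ← Finset.sum_sub_distrib]
      exact Finset.sum_congr rfl fun n _ => by ring
    have hPlam : ∀ t : ℂ, t ∈ U → t ∉ Bad → ∀ z : ℂ, q.eval z ≠ 0 →
        (∑ n : Fin N, e n z * F n t) * (1 - μ * (t - α))
          = ∑ n : Fin N, e n z * F n α := by
      intro t htU htB z hz
      obtain ⟨v, hvinj, hv⟩ := hfib t htB
      set x : Fin N → ℂ := fun n => F n t * (1 - μ * (t - α)) - F n α with hxdef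
      have hrv : ∀ k, ratEval p q (v k) = t := by
        intro k; rw [ratEval, (hv k).2]; exact mul_div_cancel_right₀ t (hv k).1
      have hk : ∀ k, ∑ n : Fin N, e n (v k) * x n = 0 := by
        intro k
        rw [hxdef, hrearr]
        have h3 := hstar (v k) (hv k).1 (by rw [hrv k]; exact htU)
        rw [hrv k] at h3
        linear_combination h3
      have hXv : ∀ k, (∑ n : Fin N, C (x n) * E n).eval (v k) = 0 := by
        intro k
        have h1 := hsum_eval x (v k) (hv k).1
        rw [hk k] at h1
        exact (div_eq_zero_iff.mp h1.symm).resolve_right (hv k).1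
      have hX0 : (∑ n : Fin N, C (x n) * E n) = 0 :=
        poly_zero_of_roots _ (hXdeg x) v hvinj hXv
      have h2 := hsum_eval x z hz
      rw [hX0] at h2
      simp only [eval_zero, zero_div] at h2
      rw [hxdef, hrearr] at h2
      linear_combination h2
    have hcont2 : ∀ (z t : ℂ), t ∈ U →
        ContinuousAt (fun s => ∑ n : Fin N, e n z * F n s) t := by
      intro z t htU
      exact tendsto_finset_sum _ (fun n _ =>
        ((hF n t htU).continuousAt).const_mul (e n z))
    have hPlam' : ∀ t : ℂ, t ∈ U → ∀ z : ℂ, q.eval z ≠ 0 →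
        (∑ n : Fin N, e n z * F n t) * (1 - μ * (t - α))
          = ∑ n : Fin N, e n z * F n α := by
      intro t htU z hz
      set Θ : ℂ → ℂ := fun s => (∑ n : Fin N, e n z * F n s) * (1 - μ * (s - α))
        - ∑ n : Fin N, e n z * F n α with hΘ
      have hc : ContinuousAt Θ t := by
        refine ContinuousAt.sub (ContinuousAt.mul (hcont2 z t htU) ?_) continuousAt_const
        exact continuousAt_const.sub (continuousAt_const.mul
          (continuousAt_id.sub continuousAt_const))
      have hev : ∀ᶠ s in nhdsWithin t {t}ᶜ, Θ s = 0 := by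
        have hUev : U ∈ nhdsWithin t {t}ᶜ := nhdsWithin_le_nhds (hUo.mem_nhds htU)
        have hBev : ((↑Bad \ {t} : Set ℂ))ᶜ ∈ nhdsWithin t {t}ᶜ := by
          refine nhdsWithin_le_nhds (IsOpen.mem_nhds ?_ ?_)
          · exact ((Bad.finite_toSet.subset Set.diff_subset).isClosed).isOpen_compl
          · exact fun h => h.2 rfl
        filter_upwards [hUev, hBev, self_mem_nhdsWithin] with s hsU hsB hst
        have hsBad : s ∉ Bad := fun hs => hsB ⟨Finset.mem_coe.mpr hs, hst⟩
        have h4 := hPlam s hsU hsBad z hz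
        rw [hΘ]
        linear_combination h4
      have h5 := eq_zero_of_eventually_punctured hc hev
      rw [hΘ] at h5
      linear_combination h5
    have hvanish : ∀ z : ℂ, q.eval z ≠ 0 → ratEval p q z ∈ U →
        1 - μ * (ratEval p q z - α) = 0 →
        (∑ n : Fin N, e n z * F n (ratEval p q z)) = 0 := by
      intro z hz hU hden
      have hμ : μ ≠ 0 := by
        intro h0; rw [h0] at hden; simp at hden
      have hgz : ∑ n : Fin N, e n z * F n α = 0 := by
        have h6 := hPlam' (ratEval p q z) hU z hz
        rw [hden, mul_zero] at h6
        exact h6.symm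
      have hzero : ∀ s, s ∈ U → s ≠ ratEval p q z →
          (∑ n : Fin N, e n z * F n s) = 0 := by
        intro s hs hst
        have h1 := hPlam' s hs z hz
        rw [hgz] at h1
        have hden' : 1 - μ * (s - α) ≠ 0 := by
          intro h0
          apply hst
          have h7 : μ * (s - α) = μ * (ratEval p q z - α) := by
            linear_combination hden - h0
          have h8 := mul_left_cancel₀ hμ h7
          linear_combination h8
        exact (mul_eq_zero.mp h1).resolve_right hden'
      have hc := hcont2 z (ratEval p q z) hU
      have hev : ∀ᶠ s in nhdsWithin (ratEval p q z) {ratEval p q z}ᶜ,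
          (∑ n : Fin N, e n z * F n s) = 0 := by
        filter_upwards [nhdsWithin_le_nhds (hUo.mem_nhds hU), self_mem_nhdsWithin]
          with s hsU hst
        exact hzero s hsU hst
      exact eq_zero_of_eventually_punctured hc hev
    refine ⟨1 + μ * α, μ, fun n => F n α, ?_, ?_, ?_, ?_⟩
    · rw [show (1 : ℂ) + μ * α - α * μ = 1 from by ring]
      exact one_ne_zero
    · intro hc0
      obtain ⟨z₀, hz₀, hU₀, hf₀⟩ := hex
      have hcz : ∀ n, F n α = 0 := fun n => congrFun hc0 n
      have h1 := hstar z₀ hz₀ hU₀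
      rw [show (∑ n : Fin N, e n z₀ * F n α) = 0 from
        Finset.sum_eq_zero fun n _ => by rw [hcz n, mul_zero]] at h1
      have hden : 1 - μ * (ratEval p q z₀ - α) = 0 := by
        by_contra hd
        exact hf₀ ((mul_eq_zero.mp h1).resolve_right hd)
      exact hf₀ (hvanish z₀ hz₀ hU₀ hden)
    · rw [show (1 : ℂ) + μ * α - α * μ = 1 from by ring, div_one]
    · intro z hz hU
      rw [show (1 + μ * α - ratEval p q z * μ) = (1 - μ * (ratEval p q z - α))
        from by ring]
      by_cases hden : 1 - μ * (ratEval p q z - α) = 0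
      · rw [hden, div_zero]
        exact hvanish z hz hU hden
      · rw [eq_div_iff hden]
        exact hPlam' (ratEval p q z) hU z hz

end
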